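/- Let G ∈ ℝ^{τ̂ × σ̂}, V ∈ ℝ^{τ̂ × τ̃}, V' ∈ ℝ^{σ̂ × σ̃} with τ̃ ⊆ τ̂, σ̃ ⊆ σ̂. If ‖G − V·G|_{τ̃ × σ̂}‖ ≤ ε₁ and ‖G − G|_{τ̂ × σ̃}·(V')ᵀ‖ ≤ ε₂ in the spectral norm, and ‖V‖ ≤ C, then the symmetric factorization satisfies ‖G − V·G|_{τ̃ × σ̃}·(V')ᵀ‖ ≤ ε₁ + C·ε₂. -/

import Mathlib

open scoped Matrix.Norms.L2Operator
open Matrix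

open Classical in
lemma row_submatrix_norm_le {α β α' : Type*}
    [Fintype α] [Fintype β] [Fintype α'] [DecidableEq α']
    (f : α' → α) (hf : Function.Injective f) (M : Matrix α β ℝ) :
    ‖M.submatrix f id‖ ≤ ‖M‖ := by
  set E : Matrix α' α ℝ := Matrix.of fun i j => if f i = j then 1 else 0 with hE
  have hEM : M.submatrix f id = E * M := by
    ext i j
    simp [hE, Matrix.mul_apply, ite_mul]
  have hEE : E * Eᴴ = (1 : Matrix α' α' ℝ) := by
    ext i i'
    simp only [Matrix.mul_apply, Matrix.conjTranspose_apply, hE, Matrix.of_apply, star_trivial,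
      Matrix.one_apply]
    rw [Finset.sum_eq_single (f i)]
    · rcases eq_or_ne i i' with h | h
      · simp [h]
      · simp [hf.eq_iff, h, h.symm]
    · intro b _ hb
      simp [Ne.symm hb]
    · simp
  have hEnorm : ‖E‖ ≤ 1 := by
    rcases isEmpty_or_nonempty α' with h | h
    · have : E = 0 := Subsingleton.elim _ _
      simp [this]
    · have h1 : ‖Eᴴᴴ * Eᴴ‖ = ‖Eᴴ‖ * ‖Eᴴ‖ := Matrix.l2_opNorm_conjTranspose_mul_self Eᴴ
      rw [Matrix.conjTranspose_conjTranspose, hEE, Matrix.l2_opNorm_conjTranspose] at h1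
      have hone : ‖(1 : Matrix α' α' ℝ)‖ = 1 := norm_one
      nlinarith [norm_nonneg E]
  calc ‖M.submatrix f id‖ = ‖E * M‖ := by rw [hEM]
    _ ≤ ‖E‖ * ‖M‖ := Matrix.l2_opNorm_mul E M
    _ ≤ 1 * ‖M‖ := by
        exact mul_le_mul_of_nonneg_right hEnorm (norm_nonneg M)
    _ = ‖M‖ := one_mul _

/-- Error estimate for the symmetric GCA factorization: if
`‖G − V G|_{τ̃×σ̂}‖ ≤ ε₁`, `‖G − G|_{τ̂×σ̃} V'ᵀ‖ ≤ ε₂` (spectral norms) and `‖V‖ ≤ C`,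
then `‖G − V G|_{τ̃×σ̃} V'ᵀ‖ ≤ ε₁ + C ε₂`. -/
theorem symmetric_factorization_error
    {α β α' β' : Type*}
    [Fintype α] [Fintype β] [Fintype α'] [Fintype β']
    [DecidableEq β] [DecidableEq α'] [DecidableEq β']
    (f : α' → α) (hf : Function.Injective f)
    (g : β' → β) (hg : Function.Injective g)
    (G : Matrix α β ℝ) (V : Matrix α α' ℝ) (V' : Matrix β β' ℝ)
    (ε₁ ε₂ C : ℝ)
    (h₁ : ‖G - V * G.submatrix f id‖ ≤ ε₁)
    (h₂ : ‖G - G.submatrix id g * V'.transpose‖ ≤ ε₂)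
    (hV : ‖V‖ ≤ C) :
    ‖G - V * G.submatrix f g * V'.transpose‖ ≤ ε₁ + C * ε₂ := by
  have hC : 0 ≤ C := le_trans (norm_nonneg V) hV
  set R : Matrix α β ℝ := G - G.submatrix id g * V'.transpose with hR
  have hsplit : G - V * G.submatrix f g * V'.transpose
      = (G - V * G.submatrix f id) + V * (R.submatrix f id) := by
    have h2 : R.submatrix f id = G.submatrix f id - G.submatrix f g * V'.transpose := by
      ext i j
      simp [hR, Matrix.mul_apply, Matrix.submatrix]
    rw [h2, Matrix.mul_sub, Matrix.mul_assoc]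
    abel
  have hRle : ‖R.submatrix f id‖ ≤ ε₂ := le_trans (row_submatrix_norm_le f hf R) h₂
  calc ‖G - V * G.submatrix f g * V'.transpose‖
      = ‖(G - V * G.submatrix f id) + V * (R.submatrix f id)‖ := by rw [hsplit]
    _ ≤ ‖G - V * G.submatrix f id‖ + ‖V * (R.submatrix f id)‖ := norm_add_le _ _
    _ ≤ ε₁ + ‖V‖ * ‖R.submatrix f id‖ :=
        add_le_add h₁ (Matrix.l2_opNorm_mul V _)
    _ ≤ ε₁ + C * ε₂ := by
        exact add_le_add_right (mul_le_mul hV hRle (norm_nonneg _) hC) ε₁
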